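/- Let R be a commutative ring, equip the free algebra R⟨X₁,…,Xₙ⟩ with a weight ℕ-gradation determined by positive integer degrees deg Xᵢ = nᵢ, let ≺ be an ℕ-graded monomial ordering on the standard monomial basis B, and let G be a monic Gröbner basis of the ideal I = ⟨G⟩. If the monomial algebra R⟨X₁,…,Xₙ⟩/⟨LM(G)⟩ is a semisimple ring (semisimple as a left module over itself), then both R⟨X₁,…,Xₙ⟩/⟨LH(G)⟩ and A = R⟨X₁,…,Xₙ⟩/I are semisimple rings. -/

import Mathlib

noncomputable section
open MonoidAlgebra
open scoped Classical

/-- Words in the alphabet `X_1, ..., X_n`: the standard monomial basis `B`. -/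
abbrev Word (n : ℕ) : Type := FreeMonoid (Fin n)

/-- The free `R`-algebra `R⟨X_1, ..., X_n⟩`, realized as the monoid algebra of the
free monoid on `n` letters over `R`. -/
abbrev FreeAlg (R : Type) [CommRing R] (n : ℕ) : Type := MonoidAlgebra R (Word n)

variable {R : Type} [CommRing R] {n : ℕ}

/-- The monomial (word) `w` viewed as an element of the free algebra. -/
def mono (R : Type) [CommRing R] {n : ℕ} (w : Word n) : FreeAlg R n :=
  MonoidAlgebra.of R (Word n) w

/-- A monomial ordering: a well-ordering on words compatible with two-sided multiplication. -/
def IsMonomialOrder (n : ℕ) [LinearOrder (Word n)] : Prop :=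
  WellFoundedLT (Word n) ∧ ∀ w u v s : Word n, u < v → w * u * s < w * v * s

/-- The leading monomial of `f` (with junk value `1` for `f = 0`). -/
def LMon [LinearOrder (Word n)] (f : FreeAlg R n) : Word n :=
  if h : f = 0 then 1 else f.coeff.support.max' (Finsupp.support_nonempty_iff.mpr (MonoidAlgebra.coeff_eq_zero.not.mpr h))

/-- The leading coefficient of `f`. -/
def LCoef [LinearOrder (Word n)] (f : FreeAlg R n) : R := f.coeff (LMon f)

/-- `f` is monic: it is nonzero and its leading coefficient is `1`. -/
def IsMonic [LinearOrder (Word n)] (f : FreeAlg R n) : Prop := f ≠ 0 ∧ LCoef f = 1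

/-- `v` divides `u` as words: `u = w * v * s` for some words `w, s`. -/
def MDvd {n : ℕ} (v u : Word n) : Prop := ∃ w s : Word n, u = w * v * s

/-- `G` is a monic Gröbner basis of the two-sided ideal `I`: every element of `G` is monic,
and the leading monomial of every nonzero element of `I` is divisible by the leading
monomial of some element of `G`. -/
def IsMonicGB [LinearOrder (Word n)] (G : Set (FreeAlg R n))
    (I : TwoSidedIdeal (FreeAlg R n)) : Prop :=
  (∀ g ∈ G, IsMonic g) ∧ ∀ f ∈ I, f ≠ 0 → ∃ g ∈ G, MDvd (LMon g) (LMon f)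

/-- The set `LM(S)` of leading monomials of the nonzero elements of `S`. -/
def LMset [LinearOrder (Word n)] (S : Set (FreeAlg R n)) : Set (Word n) :=
  {w | ∃ f ∈ S, f ≠ 0 ∧ LMon f = w}

/-- The weight degree of a word, for the weights `deg Xᵢ = d i`. -/
def wdeg {n : ℕ} (d : Fin n → ℕ) (w : Word n) : ℕ := ((FreeMonoid.toList w).map d).sum

/-- The maximal weight degree occurring in `f`. -/
def maxdeg (d : Fin n → ℕ) (f : FreeAlg R n) : ℕ := f.coeff.support.sup (wdeg d)

/-- The ℕ-leading homogeneous element `LH(f)` of `f`: the sum of the terms of `f` of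
maximal weight degree. -/
def LH (d : Fin n → ℕ) (f : FreeAlg R n) : FreeAlg R n :=
  ∑ w ∈ f.coeff.support.filter (fun w => wdeg d w = maxdeg d f), MonoidAlgebra.single w (f.coeff w)

/-- The set `LH(S)` of leading homogeneous elements of the nonzero elements of `S`. -/
def LHset (d : Fin n → ℕ) (S : Set (FreeAlg R n)) : Set (FreeAlg R n) :=
  {x | ∃ f ∈ S, f ≠ 0 ∧ x = LH d f}

/-- An ℕ-graded monomial ordering with respect to the weights `d`: a monomial ordering
such that words of smaller degree are smaller. -/
def IsGradedMonomialOrder {n : ℕ} (d : Fin n → ℕ) [LinearOrder (Word n)] : Prop :=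
  IsMonomialOrder n ∧ ∀ u v : Word n, wdeg d u < wdeg d v → u < v

/-- The quotient ring of the free algebra by a two-sided ideal. -/
abbrev QuotRing (I : TwoSidedIdeal (FreeAlg R n)) : Type := I.ringCon.Quotient

section Aux
variable (d : Fin n → ℕ)

lemma wdeg_mul (u v : Word n) : wdeg d (u * v) = wdeg d u + wdeg d v := by
  simp [wdeg, FreeMonoid.toList_mul]

lemma wdeg_one : wdeg d (1 : Word n) = 0 := by simp [wdeg, FreeMonoid.toList_one]

lemma wdeg_pos (hd : ∀ i, 0 < d i) {w : Word n} (hw : w ≠ 1) : 0 < wdeg d w := by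
  unfold wdeg
  cases h : FreeMonoid.toList w with
  | nil =>
    refine absurd ?_ hw
    have := congrArg FreeMonoid.ofList h
    simpa [FreeMonoid.ofList_toList] using this
  | cons a l =>
    simp only [List.map_cons, List.sum_cons]
    exact lt_of_lt_of_le (hd a) (Nat.le_add_right _ _)

/-- The set of words divisible by an element of `S`. -/
def DivSet (S : Set (Word n)) : Set (Word n) := {u | ∃ w ∈ S, MDvd w u}

lemma mono_eq_single (w : Word n) : mono R w = MonoidAlgebra.single w 1 := rfl

lemma divset_mul_left {S : Set (Word n)} {u v : Word n} (hv : v ∈ DivSet S) :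
    u * v ∈ DivSet S := by
  obtain ⟨w, hw, a, b, rfl⟩ := hv
  exact ⟨w, hw, u * a, b, by simp [mul_assoc]⟩

lemma divset_mul_right {S : Set (Word n)} {u v : Word n} (hu : u ∈ DivSet S) :
    u * v ∈ DivSet S := by
  obtain ⟨w, hw, a, b, rfl⟩ := hu
  exact ⟨w, hw, a, b * v, by simp [mul_assoc]⟩

/-- The two-sided ideal of elements supported on `DivSet S`. -/
def monIdeal (S : Set (Word n)) : TwoSidedIdeal (FreeAlg R n) :=
  TwoSidedIdeal.mk' {y : FreeAlg R n | ↑y.coeff.support ⊆ DivSet S}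
    (by simp)
    (by intro a b ha hb; rw [Set.mem_setOf_eq, MonoidAlgebra.coeff_add]; exact ((Finset.coe_subset.mpr Finsupp.support_add).trans
      (by rw [Finset.coe_union]; exact Set.union_subset ha hb)))
    (fun {a} ha => by rw [Set.mem_setOf_eq, MonoidAlgebra.coeff_neg, Finsupp.support_neg]; exact ha)
    (fun {a b} hb => by
      refine (Finset.coe_subset.mpr (MonoidAlgebra.support_coeff_mul_subset a b)).trans ?_
      intro t ht
      rw [Finset.coe_mul, Set.mem_mul] at ht
      obtain ⟨x, hx, y, hy, rfl⟩ := ht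
      exact divset_mul_left (hb hy))
    (fun {a b} ha => by
      refine (Finset.coe_subset.mpr (MonoidAlgebra.support_coeff_mul_subset a b)).trans ?_
      intro t ht
      rw [Finset.coe_mul, Set.mem_mul] at ht
      obtain ⟨x, hx, y, hy, rfl⟩ := ht
      exact divset_mul_right (ha hx))

lemma mem_span_mono (S : Set (Word n)) (x : FreeAlg R n) :
    x ∈ TwoSidedIdeal.span (mono R '' S) ↔ ↑x.coeff.support ⊆ DivSet S := by
  constructor
  · intro hx
    rw [TwoSidedIdeal.mem_span_iff] at hx
    have key := hx (monIdeal S) ?_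
    · rwa [monIdeal, TwoSidedIdeal.mem_mk'] at key
    · rintro _ ⟨w, hw, rfl⟩
      rw [SetLike.mem_coe, monIdeal, TwoSidedIdeal.mem_mk']
      refine (Finset.coe_subset.mpr Finsupp.support_single_subset).trans ?_
      simp only [Finset.coe_singleton, Set.singleton_subset_iff]
      exact ⟨w, hw, 1, 1, by simp⟩
  · intro hx
    have hx' : x.coeff ∈ Finsupp.supported R R (DivSet S) := (Finsupp.mem_supported R x.coeff).mpr hx
    rw [Finsupp.supported_eq_span_single] at hx'
    refine Submodule.span_induction (p := fun y _ => MonoidAlgebra.ofCoeff y ∈ TwoSidedIdeal.span (mono R '' S)) ?_ ?_ ?_ ?_ hx'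
    · rintro _ ⟨w, ⟨v, hv, a, b, rfl⟩, rfl⟩
      have h1 : mono R v ∈ TwoSidedIdeal.span (mono R '' S) :=
        TwoSidedIdeal.subset_span ⟨v, hv, rfl⟩
      have h2 := TwoSidedIdeal.mul_mem_right _ _ (MonoidAlgebra.single b (1 : R))
        (TwoSidedIdeal.mul_mem_left _ (MonoidAlgebra.single a (1 : R)) _ h1)
      have : MonoidAlgebra.single a (1 : R) * mono R v * MonoidAlgebra.single b 1
          = MonoidAlgebra.single (a * v * b) (1 : R) := by
        rw [mono_eq_single, MonoidAlgebra.single_mul_single, MonoidAlgebra.single_mul_single]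
        simp
      rwa [this] at h2
    · rw [MonoidAlgebra.ofCoeff_zero]; exact TwoSidedIdeal.zero_mem _
    · exact fun a b _ _ ha hb => by rw [MonoidAlgebra.ofCoeff_add]; exact add_mem ha hb
    · intro c y _ hy
      rw [MonoidAlgebra.ofCoeff_smul, Algebra.smul_def]
      exact TwoSidedIdeal.mul_mem_left _ _ _ hy

end Aux

section QuotAux
variable {A S₀ : Type} [Ring A] [Ring S₀]

lemma quot_mk_eq_zero (I : TwoSidedIdeal A) (x : A) : I.ringCon.mk' x = 0 ↔ x ∈ I := by
  conv_rhs => rw [← TwoSidedIdeal.ker_ringCon_mk' I]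
  rw [TwoSidedIdeal.mem_ker]

lemma quot_mk_surjective (I : TwoSidedIdeal A) : Function.Surjective I.ringCon.mk' :=
  fun q => Quotient.inductionOn' q fun a => ⟨a, rfl⟩

/-- Lift a ring hom vanishing on `I` to the quotient. -/
def qlift (I : TwoSidedIdeal A) (f : A →+* S₀) (hf : ∀ x ∈ I, f x = 0) :
    I.ringCon.Quotient →+* S₀ where
  toFun := fun q => Quotient.liftOn' q f (fun a b hab => by
    have h1 : a - b ∈ I := (I.rel_iff a b).mp hab
    have h2 := hf _ h1
    rw [map_sub, sub_eq_zero] at h2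
    exact h2)
  map_one' := f.map_one
  map_mul' := fun x y => Quotient.inductionOn₂' x y fun a b => f.map_mul a b
  map_zero' := f.map_zero
  map_add' := fun x y => Quotient.inductionOn₂' x y fun a b => f.map_add a b

lemma qlift_mk (I : TwoSidedIdeal A) (f : A →+* S₀) (hf : ∀ x ∈ I, f x = 0) (x : A) :
    qlift I f hf (I.ringCon.mk' x) = f x := rfl

end QuotAux

section LMonAux
variable [LinearOrder (Word n)] (d : Fin n → ℕ)

lemma lmon_mem {f : FreeAlg R n} (hf : f ≠ 0) : LMon f ∈ f.coeff.support := by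
  rw [LMon, dif_neg hf]; exact Finset.max'_mem _ _

lemma le_lmon {f : FreeAlg R n} {w : Word n} (hw : w ∈ f.coeff.support) : w ≤ LMon f := by
  have hf : f ≠ 0 := fun h => by simp [h] at hw
  rw [LMon, dif_neg hf]; exact Finset.le_max' _ _ hw

variable (hgr : ∀ u v : Word n, wdeg d u < wdeg d v → u < v)
include hgr

lemma wdeg_le_lmon {f : FreeAlg R n} {w : Word n} (hw : w ∈ f.coeff.support) :
    wdeg d w ≤ wdeg d (LMon f) := by
  by_contra h
  exact absurd (le_lmon hw) (not_le.mpr (hgr _ _ (not_le.mp h)))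

lemma maxdeg_eq {f : FreeAlg R n} (hf : f ≠ 0) : maxdeg d f = wdeg d (LMon f) :=
  le_antisymm (Finset.sup_le fun _ hw => wdeg_le_lmon d hgr hw)
    (Finset.le_sup (lmon_mem hf))

omit hgr

lemma LH_apply (f : FreeAlg R n) (t : Word n) :
    (LH d f).coeff t = if wdeg d t = maxdeg d f then f.coeff t else 0 := by
  rw [LH]
  rw [MonoidAlgebra.coeff_sum, Finsupp.finset_sum_apply]
  have : ∀ w ∈ f.coeff.support.filter (fun w => wdeg d w = maxdeg d f),
      (MonoidAlgebra.single w (f.coeff w)).coeff t = if w = t then f.coeff w else 0 :=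
    fun w _ => Finsupp.single_apply
  rw [Finset.sum_congr rfl this, Finset.sum_ite_eq' _ t (fun w => f.coeff w)]
  by_cases h1 : wdeg d t = maxdeg d f
  · by_cases h2 : t ∈ f.coeff.support
    · simp [h1, h2]
    · simp only [Finsupp.mem_support_iff, not_not] at h2
      simp [h1, h2]
  · simp [h1]

include hgr

lemma LH_lmon_coeff {f : FreeAlg R n} (hf : f ≠ 0) : (LH d f).coeff (LMon f) = f.coeff (LMon f) := by
  rw [LH_apply, if_pos (maxdeg_eq d hgr hf).symm]

lemma LH_ne_zero {f : FreeAlg R n} (hf : f ≠ 0) (hc : f.coeff (LMon f) ≠ 0) : LH d f ≠ 0 := by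
  intro h
  apply hc
  rw [← LH_lmon_coeff d hgr hf, h]
  rfl

omit hgr

lemma LH_support (f : FreeAlg R n) : (LH d f).coeff.support ⊆ f.coeff.support := by
  intro t ht
  rw [Finsupp.mem_support_iff] at ht ⊢
  intro h
  apply ht
  rw [LH_apply, h]
  simp

include hgr

lemma LMon_LH {f : FreeAlg R n} (hf : f ≠ 0) (hc : f.coeff (LMon f) ≠ 0) :
    LMon (LH d f) = LMon f := by
  have h0 : LH d f ≠ 0 := LH_ne_zero d hgr hf hc
  have hmem : LMon f ∈ (LH d f).coeff.support := by
    rw [Finsupp.mem_support_iff, LH_lmon_coeff d hgr hf]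
    exact hc
  exact le_antisymm (le_lmon (LH_support d _ (lmon_mem h0))) (le_lmon hmem)

end LMonAux

section Divisible
variable [LinearOrder (Word n)]

lemma all_divisible (d : Fin n → ℕ) (hd : ∀ i, 0 < d i) (h10 : (1 : R) ≠ 0)
    (S : Set (Word n))
    (hS : IsSemisimpleRing (QuotRing (TwoSidedIdeal.span (mono R '' S))))
    {m : Word n} (hm : m ≠ 1) : ∃ w ∈ S, MDvd w m := by
  set I := TwoSidedIdeal.span (mono R '' S) with hI
  set π := I.ringCon.mk' with hπ
  set Pos : Set (FreeAlg R n) := {x | ∀ w ∈ x.coeff.support, 1 ≤ wdeg d w} with hPos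
  set J : Submodule (QuotRing I) (QuotRing I) := Submodule.span _ (π '' Pos) with hJ
  have hPosMulL : ∀ (y x : FreeAlg R n), x ∈ Pos → y * x ∈ Pos := by
    intro y x hx w hw
    obtain ⟨u, hu, v, hv, rfl⟩ := Finset.mem_mul.mp (MonoidAlgebra.support_coeff_mul_subset y x hw)
    rw [wdeg_mul]
    exact le_add_of_nonneg_of_le (Nat.zero_le _) (hx v hv)
  have claim1 : ∀ q ∈ J, ∃ x ∈ Pos, π x = q := by
    intro q hq
    refine Submodule.span_induction ?_ ?_ ?_ ?_ hq
    · rintro _ ⟨x, hx, rfl⟩; exact ⟨x, hx, rfl⟩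
    · exact ⟨0, fun w hw => by simp at hw, map_zero π⟩
    · rintro a b _ _ ⟨x, hx, hx'⟩ ⟨y, hy, hy'⟩
      refine ⟨x + y, fun w hw => ?_, by rw [map_add, hx', hy']⟩
      rw [MonoidAlgebra.coeff_add] at hw
      rcases Finset.mem_union.mp (Finsupp.support_add hw) with h | h
      exacts [hx w h, hy w h]
    · rintro a q' _ ⟨x, hx, hx'⟩
      obtain ⟨y, rfl⟩ := quot_mk_surjective I a
      exact ⟨y * x, hPosMulL y x hx, by rw [map_mul, hx', smul_eq_mul]⟩
  have claim2 : ∀ (x : FreeAlg R n), x ∈ Pos → ∀ k, ∀ w ∈ (x ^ k).coeff.support, k ≤ wdeg d w := by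
    intro x hx k
    induction k with
    | zero => exact fun w _ => Nat.zero_le _
    | succ k ih =>
      intro w hw
      rw [pow_succ] at hw
      obtain ⟨u, hu, v, hv, rfl⟩ := Finset.mem_mul.mp (MonoidAlgebra.support_coeff_mul_subset _ _ hw)
      rw [wdeg_mul]
      exact add_le_add (ih u hu) (hx v hv)
  obtain ⟨c, hc⟩ := exists_isCompl J
  obtain ⟨e, he, f, hfc, hef⟩ := Submodule.mem_sup.mp
    (by rw [hc.codisjoint.eq_top]; exact Submodule.mem_top :
      (1 : QuotRing I) ∈ J ⊔ c)
  have hqe : ∀ q ∈ J, q * e = q := by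
    intro q hq
    have h1 : q * f ∈ c := by rw [← smul_eq_mul]; exact c.smul_mem q hfc
    have h2 : q * e ∈ J := by rw [← smul_eq_mul]; exact J.smul_mem q he
    have h3 : q * f = q - q * e := by
      have : q * e + q * f = q := by rw [← mul_add, hef, mul_one]
      linear_combination (norm := noncomm_ring) this
    have h4 : q - q * e ∈ J ⊓ c := ⟨sub_mem hq h2, h3 ▸ h1⟩
    rw [hc.disjoint.eq_bot, Submodule.mem_bot] at h4
    exact (sub_eq_zero.mp h4).symm
  have he2 : ∀ k, e ^ (k + 1) = e := by
    intro k
    induction k with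
    | zero => exact pow_one e
    | succ k ih => rw [pow_succ, ih, hqe e he]
  obtain ⟨x, hxPos, hxe⟩ := claim1 e he
  set N := maxdeg d x + 1 with hN
  have h5 : π (x ^ (N + 1)) = π x := by rw [map_pow, hxe, he2]
  have h6 : x - x ^ (N + 1) ∈ I := by
    rw [← quot_mk_eq_zero, map_sub, h5, sub_self]
  have h8 : ↑x.coeff.support ⊆ DivSet S := by
    intro w hw
    by_cases hw2 : w ∈ (x ^ (N + 1)).coeff.support
    · exfalso
      have hk := claim2 x hxPos (N + 1) w hw2
      have : wdeg d w ≤ maxdeg d x := Finset.le_sup hw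
      omega
    · refine (mem_span_mono S _).mp h6 ?_
      simp only [Finset.mem_coe, Finsupp.mem_support_iff] at hw hw2 ⊢
      rw [MonoidAlgebra.coeff_sub, Finsupp.sub_apply]
      simp only [not_not] at hw2
      rw [hw2, sub_zero]
      exact hw
  have he0 : e = 0 := by
    rw [← hxe, quot_mk_eq_zero]
    exact (mem_span_mono S x).mpr h8
  have hm1 : π (mono R m) ∈ J := by
    refine Submodule.subset_span ⟨mono R m, fun w hw => ?_, rfl⟩
    have : w = m := by
      have := Finsupp.support_single_subset hw
      simpa using this
    rw [this]
    exact wdeg_pos d hd hm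
  have hm2 : π (mono R m) = 0 := by rw [← hqe _ hm1, he0, mul_zero]
  have hm3 : ↑(mono R m).coeff.support ⊆ DivSet S :=
    (mem_span_mono S _).mp ((quot_mk_eq_zero I _).mp hm2)
  exact hm3 (by
    simp [mono_eq_single, Finsupp.support_single_ne_zero m h10])

end Divisible

section Reduction
variable [LinearOrder (Word n)]

lemma eq_sum_smul_mono (x : FreeAlg R n) : x = ∑ w ∈ x.coeff.support, (x.coeff w) • mono R w := by
  conv_lhs => rw [← MonoidAlgebra.sum_coeff_single x]
  rw [Finsupp.sum]
  refine Finset.sum_congr rfl fun w _ => ?_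
  rw [mono_eq_single, MonoidAlgebra.smul_single, smul_eq_mul, mul_one]

lemma mono_mem_span_sup_one
    (hwf : WellFoundedLT (Word n))
    (hmul : ∀ w u v s : Word n, u < v → w * u * s < w * v * s)
    (I' : TwoSidedIdeal (FreeAlg R n))
    (red : ∀ m : Word n, m ≠ 1 → ∃ h : FreeAlg R n, h ∈ I' ∧ h ≠ 0 ∧
           h.coeff (LMon h) = 1 ∧ MDvd (LMon h) m) :
    ∀ m : Word n, mono R m ∈ Submodule.span R ((I' : Set (FreeAlg R n)) ∪ {1}) := by
  intro m
  refine WellFounded.induction (C := fun m => mono R m ∈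
    Submodule.span R ((I' : Set (FreeAlg R n)) ∪ {1})) hwf.wf m ?_
  intro m ih
  by_cases hm : m = 1
  · subst hm
    have : mono R (1 : Word n) = 1 := by rw [mono_eq_single, MonoidAlgebra.one_def]
    rw [this]
    exact Submodule.subset_span (Or.inr rfl)
  · obtain ⟨h, hI, h0, hcoef, u, s, hm'⟩ := red m hm
    set L := LMon h with hL
    set r := h - MonoidAlgebra.single L 1 with hr
    have hrsupp : ∀ t ∈ r.coeff.support, t < L := by
      intro t ht
      rw [Finsupp.mem_support_iff] at ht
      by_cases htL : t = L
      · exfalso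
        apply ht
        rw [htL, hr, MonoidAlgebra.coeff_sub, Finsupp.sub_apply, MonoidAlgebra.coeff_single, Finsupp.single_apply, if_pos rfl, hcoef, sub_self]
      · have hrt : r.coeff t = h.coeff t := by
          rw [hr, MonoidAlgebra.coeff_sub, Finsupp.sub_apply, MonoidAlgebra.coeff_single, Finsupp.single_apply, if_neg (Ne.symm htL), sub_zero]
        have ht' : t ∈ h.coeff.support := Finsupp.mem_support_iff.mpr (hrt ▸ ht)
        exact lt_of_le_of_ne (le_lmon ht') htL
    set q := MonoidAlgebra.single u (1 : R) * r * MonoidAlgebra.single s 1 with hq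
    have hqsupp : ∀ t ∈ q.coeff.support, t < m := by
      intro t ht
      obtain ⟨uv, huv, sv, hsv, rfl⟩ := Finset.mem_mul.mp (MonoidAlgebra.support_coeff_mul_subset _ _ ht)
      obtain ⟨u', hu', v, hv, rfl⟩ := Finset.mem_mul.mp (MonoidAlgebra.support_coeff_mul_subset _ _ huv)
      have hu'' : u' = u := by simpa using Finsupp.support_single_subset hu'
      have hsv' : sv = s := by simpa using Finsupp.support_single_subset hsv
      rw [hu'', hsv', hm']
      exact hmul u v L s (hrsupp v hv)
    have key : mono R m = MonoidAlgebra.single u 1 * h * MonoidAlgebra.single s 1 - q := by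
      have h1 : mono R m = MonoidAlgebra.single u (1 : R) * MonoidAlgebra.single L 1 *
          MonoidAlgebra.single s 1 := by
        rw [mono_eq_single, hm', MonoidAlgebra.single_mul_single, MonoidAlgebra.single_mul_single]
        norm_num
      rw [h1, hq, hr]
      noncomm_ring
    rw [key]
    refine sub_mem ?_ ?_
    · exact Submodule.subset_span (Or.inl (I'.mul_mem_right _ _ (I'.mul_mem_left _ _ hI)))
    · rw [eq_sum_smul_mono q]
      exact Submodule.sum_mem _ fun t ht => Submodule.smul_mem _ _ (ih t (hqsupp t ht))

lemma span_sup_one_top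
    (hwf : WellFoundedLT (Word n))
    (hmul : ∀ w u v s : Word n, u < v → w * u * s < w * v * s)
    (I' : TwoSidedIdeal (FreeAlg R n))
    (red : ∀ m : Word n, m ≠ 1 → ∃ h : FreeAlg R n, h ∈ I' ∧ h ≠ 0 ∧
           h.coeff (LMon h) = 1 ∧ MDvd (LMon h) m)
    (x : FreeAlg R n) : x ∈ Submodule.span R ((I' : Set (FreeAlg R n)) ∪ {1}) := by
  rw [eq_sum_smul_mono x]
  exact Submodule.sum_mem _ fun w _ =>
    Submodule.smul_mem _ _ (mono_mem_span_sup_one hwf hmul I' red w)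

lemma quot_semisimple_of_span (I' : TwoSidedIdeal (FreeAlg R n))
    (hsp : ∀ x : FreeAlg R n, x ∈ Submodule.span R ((I' : Set (FreeAlg R n)) ∪ {1}))
    [IsSemisimpleRing R] : IsSemisimpleRing (QuotRing I') := by
  set π := I'.ringCon.mk' with hπ
  set φ : R →+* QuotRing I' := π.comp (algebraMap R (FreeAlg R n)) with hφ
  have hsurj : Function.Surjective φ := by
    intro q
    obtain ⟨x, rfl⟩ := quot_mk_surjective I' q
    refine Submodule.span_induction (p := fun y _ => ∃ r, φ r = π y) ?_ ?_ ?_ ?_ (hsp x)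
    · rintro y (hy | hy)
      · exact ⟨0, by rw [map_zero]; exact ((quot_mk_eq_zero I' y).mpr hy).symm⟩
      · rw [Set.mem_singleton_iff] at hy
        subst hy
        exact ⟨1, by rw [map_one, map_one]⟩
    · exact ⟨0, by rw [map_zero, map_zero]⟩
    · rintro a b _ _ ⟨r1, h1⟩ ⟨r2, h2⟩
      exact ⟨r1 + r2, by rw [map_add, map_add, h1, h2]⟩
    · rintro c y _ ⟨r, hry⟩
      refine ⟨c * r, ?_⟩
      rw [map_mul, hry, Algebra.smul_def, map_mul]
      rfl
  exact φ.isSemisimpleRing_of_surjective hsurj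

/-- The augmentation monoid hom. -/
def augHom : Word n →* R where
  toFun := fun w => if w = 1 then 1 else 0
  map_one' := if_pos rfl
  map_mul' := fun a b => by
    by_cases ha : a = 1
    · subst ha; simp
    · have hab : a * b ≠ 1 := by
        intro h
        have h2 : FreeMonoid.toList a ++ FreeMonoid.toList b = [] := by
          rw [← FreeMonoid.toList_mul, h, FreeMonoid.toList_one]
        apply ha
        have := congrArg FreeMonoid.ofList (List.append_eq_nil_iff.mp h2).1
        simpa [FreeMonoid.ofList_toList] using this
      show (if a * b = 1 then (1:R) else 0) = (if a = 1 then (1:R) else 0) * (if b = 1 then (1:R) else 0)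
      rw [if_neg ha, if_neg hab, zero_mul]

lemma base_semisimple (S : Set (Word n)) (hone : (1 : Word n) ∉ S)
    (hS : IsSemisimpleRing (QuotRing (TwoSidedIdeal.span (mono R '' S)))) :
    IsSemisimpleRing R := by
  set ε : FreeAlg R n →+* R :=
    (MonoidAlgebra.lift R R (Word n) (augHom (R := R) (n := n))).toRingHom with hε
  have hker : ∀ x ∈ TwoSidedIdeal.span (mono R '' S), ε x = 0 := by
    intro x hx
    rw [TwoSidedIdeal.mem_span_iff] at hx
    apply (TwoSidedIdeal.mem_ker ε).mp
    refine hx (TwoSidedIdeal.ker ε) ?_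
    rintro _ ⟨w, hw, rfl⟩
    rw [SetLike.mem_coe, TwoSidedIdeal.mem_ker]
    have hw1 : w ≠ 1 := fun h => hone (h ▸ hw)
    rw [mono_eq_single, hε]
    show (MonoidAlgebra.lift R R (Word n) (augHom (R := R) (n := n)))
      (MonoidAlgebra.single w 1) = 0
    rw [MonoidAlgebra.lift_single]
    simp [augHom, hw1]
  have hsurj : Function.Surjective (qlift _ ε hker) := by
    intro r
    refine ⟨(TwoSidedIdeal.span (mono R '' S)).ringCon.mk' (algebraMap R (FreeAlg R n) r), ?_⟩
    rw [qlift_mk]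
    show (MonoidAlgebra.lift R R (Word n) (augHom (R := R) (n := n)))
      (algebraMap R (FreeAlg R n) r) = r
    exact (MonoidAlgebra.lift R R (Word n) (augHom (R := R) (n := n))).commutes r
  exact (qlift _ ε hker).isSemisimpleRing_of_surjective hsurj

end Reduction

section Main
variable [LinearOrder (Word n)]

lemma quot_subsingleton_of_one_mem (I' : TwoSidedIdeal (FreeAlg R n)) (h1 : (1 : FreeAlg R n) ∈ I') :
    Subsingleton (QuotRing I') := by
  have h0 : (0 : QuotRing I') = 1 := by
    have := (quot_mk_eq_zero I' 1).mpr h1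
    rw [map_one] at this
    exact this.symm
  exact subsingleton_of_zero_eq_one h0

lemma semisimple_of_subsingleton (Q : Type) [Ring Q] [Subsingleton Q] :
    IsSemisimpleRing Q := by
  infer_instance

end Main

theorem semisimple_lifts' [LinearOrder (Word n)]
    (d : Fin n → ℕ) (hd : ∀ i, 0 < d i) (hord : IsGradedMonomialOrder d)
    (G : Set (FreeAlg R n)) (hGB : IsMonicGB G (TwoSidedIdeal.span G))
    (hS : IsSemisimpleRing (QuotRing (TwoSidedIdeal.span (mono R '' LMset G)))) :
    IsSemisimpleRing (QuotRing (TwoSidedIdeal.span (LHset d G))) ∧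
    IsSemisimpleRing (QuotRing (TwoSidedIdeal.span G)) := by
  obtain ⟨⟨hwf, hmul⟩, hgr⟩ := hord
  rcases subsingleton_or_nontrivial R with hR | hR
  · haveI : Subsingleton (FreeAlg R n) :=
      ⟨fun a b => MonoidAlgebra.ext (Finsupp.ext fun w => Subsingleton.elim _ _)⟩
    constructor <;>
      exact @semisimple_of_subsingleton _ _ ((quot_mk_surjective _).subsingleton)
  · have h10 : (1 : R) ≠ 0 := one_ne_zero
    by_cases hdeg : (1 : Word n) ∈ LMset G
    · -- degenerate case : 1 ∈ G
      obtain ⟨g, hgG, hg0, hgL⟩ := hdeg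
      have hmono := hGB.1 g hgG
      have hbot : ∀ t : Word n, t ≠ 1 → g.coeff t = 0 := by
        intro t ht
        by_contra h
        have h1 : t ≤ LMon g := le_lmon (Finsupp.mem_support_iff.mpr h)
        rw [hgL] at h1
        have h2 : (1 : Word n) < t := hgr 1 t (by
          rw [wdeg_one]
          exact wdeg_pos d hd ht)
        exact absurd h1 (not_le.mpr h2)
      have hg1 : g = 1 := by
        ext t
        rw [MonoidAlgebra.one_def, MonoidAlgebra.coeff_single, Finsupp.single_apply]
        by_cases ht : t = 1
        · subst ht
          rw [if_pos rfl]
          have := hmono.2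
          rw [LCoef, hgL] at this
          exact this
        · rw [if_neg (Ne.symm ht)]
          exact hbot t ht
      have hLH1 : LH d g = 1 := by
        rw [hg1]
        ext t
        rw [LH_apply]
        by_cases ht : wdeg d t = maxdeg d (1 : FreeAlg R n)
        · rw [if_pos ht]
        · rw [if_neg ht]
          have ht1 : t ≠ 1 := by
            intro h
            apply ht
            rw [h, wdeg_one, maxdeg]
            have hsupp : (1 : FreeAlg R n).coeff.support = {1} := by
              rw [MonoidAlgebra.one_def]
              exact Finsupp.support_single_ne_zero _ h10
            rw [hsupp]
            simp [wdeg_one]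
          rw [MonoidAlgebra.one_def, MonoidAlgebra.coeff_single, Finsupp.single_apply, if_neg (Ne.symm ht1)]
      constructor
      · haveI := quot_subsingleton_of_one_mem (TwoSidedIdeal.span (LHset d G))
          (TwoSidedIdeal.subset_span ⟨g, hgG, hg0, hLH1.symm⟩)
        infer_instance
      · haveI := quot_subsingleton_of_one_mem (TwoSidedIdeal.span G)
          (TwoSidedIdeal.subset_span (hg1 ▸ hgG))
        infer_instance
    · -- main case
      have hdiv : ∀ m : Word n, m ≠ 1 → ∃ w ∈ LMset G, MDvd w m :=
        fun m hm => all_divisible d hd h10 _ hS hm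
      haveI : IsSemisimpleRing R := base_semisimple _ hdeg hS
      constructor
      · refine quot_semisimple_of_span _ (span_sup_one_top hwf hmul _ ?_)
        intro m hm
        obtain ⟨w, ⟨g, hgG, hg0, rfl⟩, hdvd⟩ := hdiv m hm
        have hmonic := hGB.1 g hgG
        have hc : g.coeff (LMon g) ≠ 0 := by
          have := hmonic.2
          rw [LCoef] at this
          rw [this]
          exact h10
        refine ⟨LH d g, TwoSidedIdeal.subset_span ⟨g, hgG, hg0, rfl⟩,
          LH_ne_zero d hgr hg0 hc, ?_, ?_⟩
        · rw [LMon_LH d hgr hg0 hc, LH_lmon_coeff d hgr hg0]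
          have := hmonic.2
          rwa [LCoef] at this
        · rw [LMon_LH d hgr hg0 hc]
          exact hdvd
      · refine quot_semisimple_of_span _ (span_sup_one_top hwf hmul _ ?_)
        intro m hm
        obtain ⟨w, ⟨g, hgG, hg0, rfl⟩, hdvd⟩ := hdiv m hm
        have hmonic := hGB.1 g hgG
        refine ⟨g, TwoSidedIdeal.subset_span hgG, hg0, ?_, hdvd⟩
        have := hmonic.2
        rwa [LCoef] at this
/-- If `G` is a monic Gröbner basis of `I = ⟨G⟩` with respect to an
ℕ-graded monomial ordering and the monomial algebra `R⟨X⟩/⟨LM(G)⟩` is a semisimple ring, then so are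
`R⟨X⟩/⟨LH(G)⟩` and `A = R⟨X⟩/I`. -/
theorem semisimple_lifts [LinearOrder (Word n)]
    (d : Fin n → ℕ) (hd : ∀ i, 0 < d i) (hord : IsGradedMonomialOrder d)
    (G : Set (FreeAlg R n)) (hGB : IsMonicGB G (TwoSidedIdeal.span G))
    (hS : IsSemisimpleRing (QuotRing (TwoSidedIdeal.span (mono R '' LMset G)))) :
    IsSemisimpleRing (QuotRing (TwoSidedIdeal.span (LHset d G))) ∧
    IsSemisimpleRing (QuotRing (TwoSidedIdeal.span G)) := by
  exact semisimple_lifts' d hd hord G hGB hS
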